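/- For each fixed β ∈ (0,1), Λ(β,θ) → 0 as θ → ∞, where Λ(β,θ) := Γ(θ+1)·Γ((1+βθ)/(1−β)) / Γ((1+θ)/(1−β)). -/

import Mathlib

open Real Filter

/-- Real version of the Beta-Gamma relation. -/
lemma real_gamma_beta {a x : ℝ} (ha : 0 < a) (hx : 0 < x) :
    Real.Gamma a * Real.Gamma x
      = Real.Gamma (a + x) * ∫ t in (0:ℝ)..1, t ^ (a - 1) * (1 - t) ^ (x - 1) := by
  have h := Complex.Gamma_mul_Gamma_eq_betaIntegral (s := (a : ℂ)) (t := (x : ℂ))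
    (by simpa using ha) (by simpa using hx)
  have hB : Complex.betaIntegral (a : ℂ) (x : ℂ)
      = ((∫ t in (0:ℝ)..1, t ^ (a - 1) * (1 - t) ^ (x - 1) : ℝ) : ℂ) := by
    rw [Complex.betaIntegral, ← intervalIntegral.integral_ofReal]
    refine intervalIntegral.integral_congr fun t ht => ?_
    rw [Set.uIcc_of_le zero_le_one] at ht
    rw [Complex.ofReal_mul, Complex.ofReal_cpow ht.1, Complex.ofReal_cpow (by linarith [ht.2])]
    push_cast
    ring
  rw [hB, ← Complex.ofReal_add, Complex.Gamma_ofReal, Complex.Gamma_ofReal,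
    Complex.Gamma_ofReal, ← Complex.ofReal_mul, ← Complex.ofReal_mul] at h
  exact_mod_cast h

/-- Weighted AM-GM bound: the maximum of `t (1-t)^m` on `[0,1]` where `m = β/(1-β)`. -/
lemma amgm_max {β t : ℝ} (hβ0 : 0 < β) (hβ1 : β < 1) (ht0 : 0 ≤ t) (ht1 : t ≤ 1) :
    t * (1 - t) ^ (β / (1 - β)) ≤ (1 - β) * β ^ (β / (1 - β)) := by
  have h1β : 0 < 1 - β := by linarith
  set m : ℝ := β / (1 - β) with hm
  have hm0 : 0 ≤ m := by positivity
  set u : ℝ := t / (1 - β) with hu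
  set v : ℝ := (1 - t) / β with hv
  have hu0 : 0 ≤ u := by positivity
  have hv0 : 0 ≤ v := by
    have h1t : 0 ≤ 1 - t := by linarith
    positivity
  have hgm : u ^ (1 - β) * v ^ β ≤ (1 - β) * u + β * v :=
    Real.geom_mean_le_arith_mean2_weighted h1β.le hβ0.le hu0 hv0 (by ring)
  have hsum : (1 - β) * u + β * v = 1 := by
    rw [hu, hv]; field_simp; ring
  have hkey : u * v ^ m ≤ 1 := by
    have h2 : (u ^ (1 - β) * v ^ β) ^ (1 / (1 - β)) ≤ 1 := by
      apply Real.rpow_le_one (by positivity) (by rw [hsum] at hgm; exact hgm) (by positivity)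
    calc u * v ^ m = (u ^ (1 - β) * v ^ β) ^ (1 / (1 - β)) := by
          rw [Real.mul_rpow (by positivity) (by positivity),
            ← Real.rpow_mul hu0, ← Real.rpow_mul hv0,
            mul_one_div, div_self h1β.ne', Real.rpow_one, mul_one_div, hm]
      _ ≤ 1 := h2
  have ht : t = (1 - β) * u := by rw [hu]; field_simp
  have h1t : 1 - t = β * v := by rw [hv]; field_simp
  calc t * (1 - t) ^ m = (1 - β) * u * (β * v) ^ m := by rw [← ht, ← h1t]
    _ = (1 - β) * β ^ m * (u * v ^ m) := by
        rw [Real.mul_rpow hβ0.le hv0]; ring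
    _ ≤ (1 - β) * β ^ m * 1 := by
        apply mul_le_mul_of_nonneg_left hkey (by positivity)
    _ = (1 - β) * β ^ m := by ring

noncomputable def Lam (β θ : ℝ) : ℝ :=
  Real.Gamma (θ + 1) * Real.Gamma ((1 + β * θ) / (1 - β)) / Real.Gamma ((1 + θ) / (1 - β))

theorem lam_tendsto_zero_theta (β : ℝ) (hβ0 : 0 < β) (hβ1 : β < 1) :
    Filter.Tendsto (fun θ => Lam β θ) Filter.atTop (nhds 0) := by
  have h1β : 0 < 1 - β := by linarith
  set m : ℝ := β / (1 - β) with hm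
  have hm0 : 0 < m := by positivity
  set r : ℝ := (1 - β) * β ^ m with hr
  have hr0 : 0 < r := by positivity
  have hr1 : r < 1 := by
    have : β ^ m ≤ 1 := Real.rpow_le_one hβ0.le hβ1.le hm0.le
    nlinarith [hr0]
  -- the upper bound function
  set g : ℝ → ℝ := fun θ => (1 / (1 - β)) * ((1 + θ) * r ^ θ) with hg
  have hglim : Tendsto g atTop (nhds 0) := by
    set b : ℝ := -Real.log r with hb
    have hbpos : 0 < b := by
      rw [hb, neg_pos]
      exact Real.log_neg hr0 hr1
    have h0 := tendsto_rpow_mul_exp_neg_mul_atTop_nhds_zero 0 b hbpos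
    have h1 := tendsto_rpow_mul_exp_neg_mul_atTop_nhds_zero 1 b hbpos
    have hsum := h0.add h1
    rw [add_zero] at hsum
    have heq : (fun θ : ℝ => θ ^ (0:ℝ) * Real.exp (-b * θ) + θ ^ (1:ℝ) * Real.exp (-b * θ))
        =ᶠ[atTop] fun θ => (1 + θ) * r ^ θ := by
      filter_upwards [eventually_gt_atTop (0:ℝ)] with θ hθ
      rw [Real.rpow_zero, Real.rpow_one, Real.rpow_def_of_pos hr0]
      have : -b * θ = Real.log r * θ := by rw [hb]; ring
      rw [this]; ring
    have := (Tendsto.congr' heq hsum).const_mul (1 / (1 - β))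
    rwa [mul_zero] at this
  -- squeeze
  refine tendsto_of_tendsto_of_tendsto_of_le_of_le' tendsto_const_nhds hglim ?_ ?_
  · filter_upwards [eventually_gt_atTop (0:ℝ)] with θ hθ
    have h1 : 0 < θ + 1 := by linarith
    have h2 : 0 < (1 + β * θ) / (1 - β) := by positivity
    have h3 : 0 < (1 + θ) / (1 - β) := by positivity
    exact div_nonneg (mul_nonneg (Real.Gamma_pos_of_pos h1).le
      (Real.Gamma_pos_of_pos h2).le) (Real.Gamma_pos_of_pos h3).le
  · filter_upwards [eventually_gt_atTop (0:ℝ)] with θ hθ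
    set a : ℝ := θ + 1 with ha
    set x : ℝ := (1 + β * θ) / (1 - β) with hx
    set c : ℝ := (1 + θ) / (1 - β) with hc
    have hapos : 0 < a := by linarith
    have hxpos : 0 < x := by positivity
    have hcpos : 0 < c := by positivity
    have hx1 : x - 1 = m * (1 + θ) := by
      rw [hx, hm]; field_simp; ring
    have hx1pos : 0 < x - 1 := by rw [hx1]; positivity
    have hax : a + x = c + 1 := by
      rw [ha, hx, hc]; field_simp; ring
    -- the Beta integral
    set B : ℝ := ∫ t in (0:ℝ)..1, t ^ (a - 1) * (1 - t) ^ (x - 1) with hB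
    have hGamma : Real.Gamma a * Real.Gamma x = Real.Gamma (a + x) * B :=
      real_gamma_beta hapos hxpos
    have hLam : Lam β θ = c * B := by
      have hGc : Real.Gamma (a + x) = c * Real.Gamma c := by
        rw [hax, Real.Gamma_add_one hcpos.ne']
      have hGcpos : 0 < Real.Gamma c := Real.Gamma_pos_of_pos hcpos
      rw [Lam]
      rw [show θ + 1 = a from rfl, show (1 + β * θ) / (1 - β) = x from rfl,
        show (1 + θ) / (1 - β) = c from rfl, hGamma, hGc]
      field_simp
    -- bound the integrand pointwise
    have hpt : ∀ t ∈ Set.Icc (0:ℝ) 1, t ^ (a - 1) * (1 - t) ^ (x - 1) ≤ r ^ θ := by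
      intro t ht
      obtain ⟨ht0, ht1⟩ := ht
      have ha1 : a - 1 = θ := by rw [ha]; ring
      rcases eq_or_lt_of_le ht0 with h | h
      · rw [← h, ha1, Real.zero_rpow hθ.ne', zero_mul]
        positivity
      rcases eq_or_lt_of_le ht1 with h' | h'
      · rw [h', sub_self, Real.zero_rpow hx1pos.ne', mul_zero]
        positivity
      -- 0 < t < 1
      have h1t : 0 < 1 - t := by linarith
      have step1 : (1 - t) ^ (x - 1) ≤ (1 - t) ^ (m * θ) := by
        apply Real.rpow_le_rpow_of_exponent_ge h1t (by linarith)
        rw [hx1]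
        nlinarith [hm0]
      have step2 : t ^ (a - 1) * (1 - t) ^ (m * θ) = (t * (1 - t) ^ m) ^ θ := by
        rw [Real.mul_rpow ht0 (by positivity), ← Real.rpow_mul h1t.le, ha1]
      have step3 : (t * (1 - t) ^ m) ^ θ ≤ r ^ θ := by
        apply Real.rpow_le_rpow (by positivity) _ hθ.le
        exact amgm_max hβ0 hβ1 ht0 ht1
      calc t ^ (a - 1) * (1 - t) ^ (x - 1)
          ≤ t ^ (a - 1) * (1 - t) ^ (m * θ) :=
            mul_le_mul_of_nonneg_left step1 (by positivity)
        _ = (t * (1 - t) ^ m) ^ θ := step2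
        _ ≤ r ^ θ := step3
    -- integrate the bound
    have hcont : ContinuousOn (fun t : ℝ => t ^ (a - 1) * (1 - t) ^ (x - 1))
        (Set.uIcc (0:ℝ) 1) := by
      apply ContinuousOn.mul
      · exact continuousOn_id.rpow_const fun t _ => Or.inr (by rw [ha]; linarith)
      · exact (continuousOn_const.sub continuousOn_id).rpow_const
          fun t _ => Or.inr hx1pos.le
    have hint : B ≤ r ^ θ := by
      have h1 : (∫ _ in (0:ℝ)..1, r ^ θ) = r ^ θ := by simp
      rw [hB, ← h1]
      apply intervalIntegral.integral_mono_on zero_le_one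
        (hcont.intervalIntegrable) intervalIntegrable_const
      intro t ht
      exact hpt t ht
    calc Lam β θ = c * B := hLam
      _ ≤ c * r ^ θ := mul_le_mul_of_nonneg_left hint hcpos.le
      _ = g θ := by rw [hg, hc]; ring
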